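/- Let p > 1 and q satisfy 1/p + 1/q = 1. Let X_1, ..., X_M be identically distributed nonnegative real random variables with E[X_1^p] < ∞, and let X_(1) ≤ ... ≤ X_(M) denote their order statistics. Then for any subset A ⊆ {1,...,M} with |A| = m, we have E[∑_{j∈A} X_(j)] ≤ (E[X_1^p])^{1/p} · M^{1/p} · m^{1/q}. -/

import Mathlib

open MeasureTheory ProbabilityTheory Finset

/-- Order statistics of a finite family of random variables, defined pointwise
by sorting the sample values. -/
noncomputable def orderStat {Ω : Type*} {M : ℕ} (X : Fin M → Ω → ℝ) (j : Fin M) (ω : Ω) : ℝ :=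
  X (Tuple.sort (fun i => X i ω) j) ω

/-- For identically distributed nonnegative random variables with finite
`p`-th moment (`p > 1`, `1/p + 1/q = 1`), the expected sum of the order statistics
indexed by a set `A` of size `m` is at most `‖X₁‖_p · M^{1/p} · m^{1/q}`. -/
theorem trimmed_sum_expectation_bound
    {Ω : Type*} [MeasurableSpace Ω] (μ : Measure Ω) [IsProbabilityMeasure μ]
    {M : ℕ} (hM : 0 < M) (X : Fin M → Ω → ℝ)
    (hmeas : ∀ i, Measurable (X i))
    (hnonneg : ∀ i ω, 0 ≤ X i ω)
    (hident : ∀ i, μ.map (X i) = μ.map (X ⟨0, hM⟩))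
    (p q : ℝ) (hp : 1 < p) (hpq : 1 / p + 1 / q = 1)
    (hmom : Integrable (fun ω => X ⟨0, hM⟩ ω ^ p) μ)
    (A : Finset (Fin M)) :
    (∫ ω, ∑ j ∈ A, orderStat X j ω ∂μ) ≤
      (∫ ω, X ⟨0, hM⟩ ω ^ p ∂μ) ^ (1 / p) * (M : ℝ) ^ (1 / p) * (A.card : ℝ) ^ (1 / q) := by
  have hpq' : Real.HolderConjugate p q := by
    have hq : 0 < q := by
      have h1 : 1 / p < 1 := by rw [div_lt_one (by linarith)]; exact hp
      have h2 : 0 < 1 / q := by linarith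
      exact one_div_pos.mp h2
    exact { inv_add_inv_eq_inv := by simpa [one_div] using hpq
            left_pos := by linarith
            right_pos := hq }
  have hp0 : 0 < p := hpq'.pos
  set X0 := X ⟨0, hM⟩ with hX0
  -- integrability of each X i ^ p
  have hrpow_meas : Measurable fun x : ℝ => x ^ p := (Real.continuous_rpow_const hp0.le).measurable
  have hint : ∀ i, Integrable (fun ω => X i ω ^ p) μ := by
    intro i
    have h1 : Integrable (fun x : ℝ => x ^ p) (μ.map X0) := by
      rw [integrable_map_measure hrpow_meas.aestronglyMeasurable (hmeas _).aemeasurable]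
      exact hmom
    rw [← hident i] at h1
    rw [integrable_map_measure hrpow_meas.aestronglyMeasurable (hmeas i).aemeasurable] at h1
    exact h1
  have hieq : ∀ i, (∫ ω, X i ω ^ p ∂μ) = ∫ ω, X0 ω ^ p ∂μ := by
    intro i
    have h1 : (∫ ω, X i ω ^ p ∂μ) = ∫ x, x ^ p ∂(μ.map (X i)) :=
      (integral_map (hmeas i).aemeasurable hrpow_meas.aestronglyMeasurable).symm
    rw [h1, hident i, integral_map (hmeas _).aemeasurable hrpow_meas.aestronglyMeasurable]
  -- the dominating function S and g = S^{1/p}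
  set S : Ω → ℝ := fun ω => ∑ i : Fin M, X i ω ^ p with hS
  have hSnonneg : ∀ ω, 0 ≤ S ω := fun ω =>
    Finset.sum_nonneg fun i _ => Real.rpow_nonneg (hnonneg i ω) p
  have hSint : Integrable S μ := integrable_finset_sum _ fun i _ => hint i
  have hSmeas : Measurable S := Finset.measurable_sum _ fun i _ => hrpow_meas.comp (hmeas i)
  set g : Ω → ℝ := fun ω => S ω ^ (1 / p) with hg
  have hgmeas : Measurable g :=
    (Real.continuous_rpow_const (by positivity : (0:ℝ) ≤ 1 / p)).measurable.comp hSmeas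
  have hgnonneg : ∀ ω, 0 ≤ g ω := fun ω => Real.rpow_nonneg (hSnonneg ω) _
  have hgp : ∀ ω, g ω ^ p = S ω := by
    intro ω
    rw [hg, ← Real.rpow_mul (hSnonneg ω), one_div, inv_mul_cancel₀ hp0.ne', Real.rpow_one]
  -- pointwise bound
  have hpt : ∀ ω, (∑ j ∈ A, orderStat X j ω) ≤ g ω * (A.card : ℝ) ^ (1 / q) := by
    intro ω
    set σ : Equiv.Perm (Fin M) := Tuple.sort (fun i => X i ω) with hσ
    have h1 : (∑ j ∈ A, orderStat X j ω) = ∑ i ∈ A.image σ, X i ω := by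
      rw [Finset.sum_image (fun a _ b _ h => σ.injective h)]
      rfl
    have h2 : (∑ i ∈ A.image σ, X i ω) = ∑ i ∈ A.image σ, X i ω * 1 := by simp
    have h3 : (∑ i ∈ A.image σ, X i ω * 1) ≤
        (∑ i ∈ A.image σ, X i ω ^ p) ^ (1 / p) * (∑ i ∈ A.image σ, (1 : ℝ) ^ q) ^ (1 / q) :=
      Real.inner_le_Lp_mul_Lq_of_nonneg _ hpq' (fun i _ => hnonneg i ω) (fun i _ => zero_le_one)
    have h4 : (∑ i ∈ A.image σ, X i ω ^ p) ≤ S ω :=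
      Finset.sum_le_sum_of_subset_of_nonneg (Finset.subset_univ _)
        (fun i _ _ => Real.rpow_nonneg (hnonneg i ω) p)
    have h5 : (∑ i ∈ A.image σ, (1 : ℝ) ^ q) = (A.card : ℝ) := by
      simp [Finset.card_image_of_injective _ σ.injective]
    calc (∑ j ∈ A, orderStat X j ω) = ∑ i ∈ A.image σ, X i ω * 1 := by rw [h1, ← h2]
      _ ≤ (∑ i ∈ A.image σ, X i ω ^ p) ^ (1 / p) * (∑ i ∈ A.image σ, (1 : ℝ) ^ q) ^ (1 / q) := h3
      _ ≤ g ω * (A.card : ℝ) ^ (1 / q) := by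
          rw [h5]
          exact mul_le_mul_of_nonneg_right
            (Real.rpow_le_rpow (Finset.sum_nonneg fun i _ =>
              Real.rpow_nonneg (hnonneg i ω) p) h4 (by positivity))
            (Real.rpow_nonneg (Nat.cast_nonneg _) _)
  -- Memℒp of g
  have hgmem : MemLp g (ENNReal.ofReal p) μ := by
    have hne0 : ENNReal.ofReal p ≠ 0 := by simp [ENNReal.ofReal_eq_zero, not_le, hp0]
    have hnetop : ENNReal.ofReal p ≠ ⊤ := ENNReal.ofReal_ne_top
    refine (memLp_norm_rpow_iff (μ := μ) (q := ENNReal.ofReal p) (p := ENNReal.ofReal p)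
      hgmeas.aestronglyMeasurable hne0 hnetop).mp ?_
    have hdiv : ENNReal.ofReal p / ENNReal.ofReal p = 1 := ENNReal.div_self hne0 hnetop
    rw [hdiv, memLp_one_iff_integrable]
    have heq : (fun x => ‖g x‖ ^ (ENNReal.ofReal p).toReal) = S := by
      funext ω
      rw [Real.norm_of_nonneg (hgnonneg ω), ENNReal.toReal_ofReal hp0.le, hgp ω]
    rw [heq]
    exact hSint
  have hgint : Integrable g μ :=
    hgmem.integrable (by simpa using ENNReal.one_le_ofReal.mpr hp.le)
  -- integral Hölder with constant 1
  have honeMem : MemLp (fun _ : Ω => (1 : ℝ)) (ENNReal.ofReal q) μ := memLp_const 1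
  have hHolder : (∫ ω, g ω * 1 ∂μ) ≤
      (∫ ω, g ω ^ p ∂μ) ^ (1 / p) * (∫ ω, (1 : ℝ) ^ q ∂μ) ^ (1 / q) :=
    integral_mul_le_Lp_mul_Lq_of_nonneg hpq'
      (Filter.Eventually.of_forall hgnonneg) (Filter.Eventually.of_forall fun _ => zero_le_one)
      hgmem honeMem
  have hSval : (∫ ω, S ω ∂μ) = (M : ℝ) * ∫ ω, X0 ω ^ p ∂μ := by
    rw [hS, integral_finset_sum _ fun i _ => hint i]
    simp [hieq]
  have hmomnn : 0 ≤ ∫ ω, X0 ω ^ p ∂μ :=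
    integral_nonneg fun ω => Real.rpow_nonneg (hnonneg _ ω) p
  have hgval : (∫ ω, g ω ∂μ) ≤ (∫ ω, X0 ω ^ p ∂μ) ^ (1 / p) * (M : ℝ) ^ (1 / p) := by
    have h1 : (∫ ω, g ω ∂μ) = ∫ ω, g ω * 1 ∂μ := by simp
    have h2 : (∫ ω, (1 : ℝ) ^ q ∂μ) = 1 := by simp
    have h3 : (∫ ω, g ω ^ p ∂μ) = (M : ℝ) * ∫ ω, X0 ω ^ p ∂μ := by
      rw [← hSval]; exact integral_congr_ae (Filter.Eventually.of_forall fun ω => hgp ω)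
    calc (∫ ω, g ω ∂μ) = ∫ ω, g ω * 1 ∂μ := h1
      _ ≤ (∫ ω, g ω ^ p ∂μ) ^ (1 / p) * (∫ ω, (1 : ℝ) ^ q ∂μ) ^ (1 / q) := hHolder
      _ = ((M : ℝ) * ∫ ω, X0 ω ^ p ∂μ) ^ (1 / p) := by rw [h3, h2]; simp
      _ = (∫ ω, X0 ω ^ p ∂μ) ^ (1 / p) * (M : ℝ) ^ (1 / p) := by
          rw [Real.mul_rpow (by positivity) hmomnn, mul_comm]
  -- put it together
  have hmain : (∫ ω, ∑ j ∈ A, orderStat X j ω ∂μ) ≤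
      (∫ ω, g ω ∂μ) * (A.card : ℝ) ^ (1 / q) := by
    have := integral_mono_of_nonneg
      (Filter.Eventually.of_forall fun ω => Finset.sum_nonneg fun j _ => by
        simpa [orderStat] using hnonneg _ ω)
      (hgint.mul_const ((A.card : ℝ) ^ (1 / q)))
      (Filter.Eventually.of_forall hpt)
    simpa [integral_mul_const] using this
  calc (∫ ω, ∑ j ∈ A, orderStat X j ω ∂μ)
      ≤ (∫ ω, g ω ∂μ) * (A.card : ℝ) ^ (1 / q) := hmain
    _ ≤ ((∫ ω, X0 ω ^ p ∂μ) ^ (1 / p) * (M : ℝ) ^ (1 / p)) * (A.card : ℝ) ^ (1 / q) :=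
        mul_le_mul_of_nonneg_right hgval (Real.rpow_nonneg (Nat.cast_nonneg _) _)
    _ = (∫ ω, X0 ω ^ p ∂μ) ^ (1 / p) * (M : ℝ) ^ (1 / p) * (A.card : ℝ) ^ (1 / q) := by ring
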